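/- Let R be a Rota-Baxter operator of weight 1 on an associative algebra A and R̃ = id - R. Then for any x₁,...,xₙ ∈ A: ∏ᵢ R(xᵢ) = R( ∏ᵢ R(xᵢ) - (-1)ⁿ ∏ᵢ R̃(xᵢ) ), where products are taken in order of increasing index. -/
import Mathlib


/-- For a weight-1 Rota-Baxter operator `R` with `R̃ = id - R` and any
`x₁, …, xₙ`: `∏ᵢ R(xᵢ) = R(∏ᵢ R(xᵢ) - (-1)ⁿ ∏ᵢ R̃(xᵢ))`, products in order
of increasing index. -/
theorem stmt_9 {K : Type*} [Field K] [CharZero K] {A : Type*} [Ring A] [Algebra K A]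
    (R : A →ₗ[K] A)
    (hRB : ∀ x y : A, R x * R y + R (x * y) = R (R x * y + x * R y)) :
    ∀ l : List A, l ≠ [] →
      (l.map fun x => R x).prod =
        R ((l.map fun x => R x).prod -
            (-1 : A) ^ l.length * (l.map fun x => x - R x).prod) := by
  have key : ∀ a b : A, R a * R b = R (R a * b + a * R b - a * b) := by
    intro a b
    have h : R a * R b = R (R a * b + a * R b) - R (a * b) := eq_sub_of_add_eq (hRB a b)
    rw [h, map_sub]
  have step : ∀ (x p q c : A), (∀ a : A, c * a = a * c) → p = R (p - c * q) →
      R x * p = R (R x * p + c * ((x - R x) * q)) := by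
    intro x p q c hc hp
    calc R x * p = R x * R (p - c * q) := by rw [← hp]
      _ = R (R x * (p - c * q) + x * R (p - c * q) - x * (p - c * q)) := key _ _
      _ = R (R x * (p - c * q) + x * p - x * (p - c * q)) := by rw [← hp]
      _ = R (R x * p + c * ((x - R x) * q)) := by
          congr 1
          have h1 : R x * (c * q) = c * (R x * q) := by rw [← mul_assoc, ← hc, mul_assoc]
          have h2 : x * (c * q) = c * (x * q) := by rw [← mul_assoc, ← hc, mul_assoc]
          rw [mul_sub, mul_sub, h1, h2, sub_mul, mul_sub]
          abel
  intro l hl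
  induction l with
  | nil => exact absurd rfl hl
  | cons x t ih =>
    cases t with
    | nil =>
      simp only [List.map_cons, List.map_nil, List.prod_cons, List.prod_nil, mul_one,
        List.length_cons, List.length_nil, zero_add, pow_one, neg_one_mul, sub_neg_eq_add]
      congr 1
      abel
    | cons y t' =>
      have ih' := ih (by simp)
      set s := y :: t' with hs
      rw [List.map_cons, List.prod_cons, List.map_cons, List.prod_cons, List.length_cons,
        pow_succ, mul_neg_one, neg_mul, sub_neg_eq_add]
      exact step x _ _ _ (fun a => ((Commute.neg_one_left a).pow_left s.length).eq) ih'
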